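/- Let E be a finite nonempty linearly ordered set and I an irreflexive symmetric relation on E. Consider the two pointed M(E,I)-sets on the pointed set {x_0, x_1, *}: 𝔏, in which x_0·e = x_1, x_1·e = * and *·e = * for every e ∈ E, and 𝔑, in which x_0·e = *, x_1·e = * and *·e = * for every e ∈ E. Then for every s ≥ 0 there is an isomorphism of abelian groups H_s(A(𝔏)) ≅ H_s(A(𝔑)); in particular, for s ≥ 1 both are isomorphic to (H_s(K(E,I)))^2 ⊕ ℤ^{p_s}. -/

import Mathlib

/-!
Common setup: free partially commutative monoid `M(E,I)` data, cliques of the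
commutation relation, the augmented clique chain complex `K(E,I)`, the chain
complexes `A(X^•)` and `B(X^•)` of a pointed `M(E,I)`-set, and their homology.

A pointed `M(E,I)`-set with underlying non-base part `X` is modelled as an
action `act : Option X → E → Option X`, where `none` is the base point `*`.
-/

namespace PCMHomology

variable {E : Type*} [LinearOrder E] [Fintype E]

/-- `S` is a clique for the relation `I`: distinct elements pairwise satisfy `I`. -/
def IsClique (I : E → E → Prop) (S : Finset E) : Prop :=
  ∀ a ∈ S, ∀ b ∈ S, a ≠ b → I a b

/-- The type of `s`-cliques: `s`-element subsets of `E` whose elements pairwise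
commute (satisfy `I`). -/
def Clique (I : E → E → Prop) (s : ℕ) : Type _ :=
  {S : Finset E // S.card = s ∧ IsClique I S}

/-- `p_s`, the number of `s`-cliques. -/
noncomputable def pClique (I : E → E → Prop) (s : ℕ) : ℕ :=
  Nat.card (Clique I s)

/-- Removing an element of an `(s+1)`-clique yields an `s`-clique. -/
def faceClique {I : E → E → Prop} {s : ℕ} (S : Clique I (s + 1))
    (e : {a // a ∈ S.val}) : Clique I s :=
  ⟨S.val.erase e.val, by
    refine ⟨?_, ?_⟩
    · rw [Finset.card_erase_of_mem e.property, S.property.1]; rfl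
    · intro a ha b hb hab
      exact S.property.2 a (Finset.mem_of_mem_erase ha) b
        (Finset.mem_of_mem_erase hb) hab⟩

/-- If `e` is the `k`-th element of the clique `S = {e_1 < ⋯ < e_{s+1}}` then
`posIdx S e = k - 1`, the number of elements of `S` smaller than `e`. -/
def posIdx {I : E → E → Prop} {s : ℕ} (S : Clique I (s + 1))
    (e : {a // a ∈ S.val}) : ℕ :=
  (S.val.filter (fun a => a < e.val)).card

/-- Degree-`s` component of the augmented clique chain complex `K(E,I)`:
the free abelian group on the `s`-cliques. -/
abbrev KC (I : E → E → Prop) (s : ℕ) : Type _ := Clique I s →₀ ℤ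

/-- The differential of `K(E,I)`:
`d (e_1,…,e_{s+1}) = ∑ (-1)^(k+1) (e_1,…,ê_k,…,e_{s+1})`. -/
noncomputable def Kd (I : E → E → Prop) (s : ℕ) : KC I (s + 1) →+ KC I s :=
  Finsupp.liftAddHom fun S => zmultiplesHom _
    (∑ e ∈ S.val.attach,
      ((-1 : ℤ) ^ posIdx S e) • Finsupp.single (faceClique S e) (1 : ℤ))

/-- Degree-`s` component of the chain complex `A(X^•)`: the free abelian group
on pairs `(x, S)` with `x ∈ X^•` (including the base point `* = none`) and `S`
an `s`-clique. -/
abbrev AC (I : E → E → Prop) (X : Type*) (s : ℕ) : Type _ :=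
  (Option X × Clique I s) →₀ ℤ

/-- The differential of `A(X^•)`:
`d (x; e_1,…,e_{s+1}) = ∑ (-1)^k ((x·e_k; …ê_k…) - (x; …ê_k…))`. -/
noncomputable def Ad (I : E → E → Prop) {X : Type*}
    (act : Option X → E → Option X) (s : ℕ) : AC I X (s + 1) →+ AC I X s :=
  Finsupp.liftAddHom fun p => zmultiplesHom _
    (∑ e ∈ p.2.val.attach, ((-1 : ℤ) ^ (posIdx p.2 e + 1)) •
      (Finsupp.single (act p.1 e.val, faceClique p.2 e) (1 : ℤ)
        - Finsupp.single (p.1, faceClique p.2 e) (1 : ℤ)))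

/-- Degree-`s` component of the chain complex `B(X^•)`: the free abelian group
on pairs `(x, S)` with `x ∈ X` (so `x ≠ *`) and `S` an `s`-clique. -/
abbrev BC (I : E → E → Prop) (X : Type*) (s : ℕ) : Type _ :=
  (X × Clique I s) →₀ ℤ

/-- The generator `(x·e; T)` of `B(X^•)`, interpreted as `0` when `x·e = *`. -/
noncomputable def bGen {I : E → E → Prop} {X : Type*} {s : ℕ} (o : Option X) (T : Clique I s) :
    BC I X s :=
  o.elim 0 (fun y => Finsupp.single (y, T) (1 : ℤ))

/-- The differential of `B(X^•)`:
`d (x; e_1,…,e_{s+1}) = ∑ (-1)^k ((x·e_k; …ê_k…) - (x; …ê_k…))`, with a term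
`(x·e_k; T)` interpreted as `0` when `x·e_k = *`. -/
noncomputable def Bd (I : E → E → Prop) {X : Type*}
    (act : Option X → E → Option X) (s : ℕ) : BC I X (s + 1) →+ BC I X s :=
  Finsupp.liftAddHom fun p => zmultiplesHom _
    (∑ e ∈ p.2.val.attach, ((-1 : ℤ) ^ (posIdx p.2 e + 1)) •
      (bGen (act (some p.1) e.val) (faceClique p.2 e)
        - Finsupp.single (p.1, faceClique p.2 e) (1 : ℤ)))

/-- Homology at `C1` of `C2 -d2→ C1 -d1→ C0`: the kernel of `d1` modulo (its
intersection with) the image of `d2`. -/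
abbrev homologyOf {C2 C1 C0 : Type*} [AddCommGroup C2] [AddCommGroup C1]
    [AddCommGroup C0] (d1 : C1 →+ C0) (d2 : C2 →+ C1) : Type _ :=
  d1.ker ⧸ ((d2.range).addSubgroupOf d1.ker)

/-- The homology groups of a nonnegatively graded chain complex `(C, d)`;
in degree `0` this is `C 0 / im (d 0)`. -/
def Hmlgy (C : ℕ → Type*) [∀ n, AddCommGroup (C n)]
    (d : ∀ n, C (n + 1) →+ C n) : ℕ → Type _
  | 0 => homologyOf (0 : C 0 →+ PUnit.{1}) (d 0)
  | (s + 1) => homologyOf (d s) (d (s + 1))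

instance hmlgyAddCommGroup (C : ℕ → Type*) [∀ n, AddCommGroup (C n)]
    (d : ∀ n, C (n + 1) →+ C n) : ∀ s, AddCommGroup (Hmlgy C d s)
  | 0 => inferInstanceAs (AddCommGroup (homologyOf (0 : C 0 →+ PUnit.{1}) (d 0)))
  | (s + 1) => inferInstanceAs (AddCommGroup (homologyOf (d s) (d (s + 1))))

end PCMHomology

namespace PCMHomology

/-- The pointed `M(E,I)`-set `𝔏` on `{x₀, x₁, *}` (with `X = Fin 2`,
`x₀ = 0`, `x₁ = 1`): `x₀·e = x₁`, `x₁·e = *`, `*·e = *` for every `e ∈ E`. -/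
def actL (E : Type*) : Option (Fin 2) → E → Option (Fin 2) :=
  fun o _ => o.bind (fun x => if x = 0 then some 1 else none)

/-- The pointed `M(E,I)`-set `𝔑` on `{x₀, x₁, *}` (with `X = Fin 2`):
`x₀·e = *`, `x₁·e = *`, `*·e = *` for every `e ∈ E`. -/
def actN (E : Type*) : Option (Fin 2) → E → Option (Fin 2) :=
  fun _ _ => none



section Infra

variable {G H : Type*}

lemma finsuppIntHom_ext {α M : Type*} [AddCommGroup M] {f g : (α →₀ ℤ) →+ M}
    (h : ∀ a, f (Finsupp.single a 1) = g (Finsupp.single a 1)) : f = g := by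
  apply Finsupp.addHom_ext
  intro a b
  have hb : (Finsupp.single a b) = b • Finsupp.single a (1 : ℤ) := by
    rw [Finsupp.smul_single, smul_eq_mul, mul_one]
  rw [hb, map_zsmul, map_zsmul, h]

lemma map_eq_of_mem_iff [AddGroup G] [AddGroup H] (e : G ≃+ H) (A : AddSubgroup G)
    (B : AddSubgroup H) (h : ∀ x, x ∈ A ↔ e x ∈ B) :
    AddSubgroup.map (e : G →+ H) A = B := by
  ext y
  simp only [AddSubgroup.mem_map]
  constructor
  · rintro ⟨x, hx, rfl⟩; exact (h x).mp hx
  · intro hy; exact ⟨e.symm y, (h _).mpr (by simpa using hy), by simp⟩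

/-- restriction of an equivalence to kernels -/
def kerEquivOfEquiv {C1 C0 C1' C0' : Type*} [AddCommGroup C1] [AddCommGroup C0]
    [AddCommGroup C1'] [AddCommGroup C0']
    (d1 : C1 →+ C0) (d1' : C1' →+ C0') (e : C1 ≃+ C1')
    (hker : ∀ x, d1 x = 0 ↔ d1' (e x) = 0) : d1.ker ≃+ d1'.ker where
  toFun x := ⟨e x.1, AddMonoidHom.mem_ker.mpr ((hker x.1).mp (AddMonoidHom.mem_ker.mp x.2))⟩
  invFun y := ⟨e.symm y.1, AddMonoidHom.mem_ker.mpr (by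
    have := (hker (e.symm y.1))
    rw [e.apply_symm_apply] at this
    exact this.mpr (AddMonoidHom.mem_ker.mp y.2))⟩
  left_inv x := by ext; simp
  right_inv y := by ext; simp
  map_add' x y := by ext; simp

noncomputable def homologyOfCongr {C2 C1 C0 C2' C1' C0' : Type*} [AddCommGroup C2]
    [AddCommGroup C1] [AddCommGroup C0] [AddCommGroup C2'] [AddCommGroup C1'] [AddCommGroup C0']
    (d1 : C1 →+ C0) (d2 : C2 →+ C1) (d1' : C1' →+ C0') (d2' : C2' →+ C1')
    (e : C1 ≃+ C1') (hker : ∀ x, d1 x = 0 ↔ d1' (e x) = 0)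
    (hrange : ∀ x : C1, (∃ y, d2 y = x) ↔ ∃ y, d2' y = e x) :
    homologyOf d1 d2 ≃+ homologyOf d1' d2' :=
  QuotientAddGroup.congr _ _ (kerEquivOfEquiv d1 d1' e hker) (by
    apply map_eq_of_mem_iff
    intro x
    simp only [AddSubgroup.mem_addSubgroupOf, AddMonoidHom.mem_range]
    exact hrange x.1)

noncomputable def hmlgyCongr (C C' : ℕ → Type*) [∀ n, AddCommGroup (C n)]
    [∀ n, AddCommGroup (C' n)]
    (d : ∀ n, C (n + 1) →+ C n) (d' : ∀ n, C' (n + 1) →+ C' n)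
    (e : ∀ n, C n ≃+ C' n) (hcomm : ∀ n x, e n (d n x) = d' n (e (n + 1) x)) :
    ∀ s, Hmlgy C d s ≃+ Hmlgy C' d' s
  | 0 => homologyOfCongr _ _ _ _ (e 0) (fun _ => by simp)
      (fun x => ⟨fun ⟨y, hy⟩ => ⟨e 1 y, by rw [← hcomm, hy]⟩,
        fun ⟨y, hy⟩ => ⟨(e 1).symm y, (e 0).injective (by rw [hcomm]; simpa using hy)⟩⟩)
  | (s + 1) => homologyOfCongr _ _ _ _ (e (s + 1))
      (fun x => by
        rw [← hcomm]
        exact ⟨fun h => by rw [h, map_zero], fun h => (e s).injective (by simpa using h)⟩)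
      (fun x => ⟨fun ⟨y, hy⟩ => ⟨e (s + 2) y, by rw [← hcomm, hy]⟩,
        fun ⟨y, hy⟩ => ⟨(e (s + 2)).symm y, (e (s + 1)).injective (by rw [hcomm]; simpa using hy)⟩⟩)

def kerZeroEquiv {C1 C0 : Type*} [AddCommGroup C1] [AddCommGroup C0] :
    (0 : C1 →+ C0).ker ≃+ C1 where
  toFun := Subtype.val
  invFun x := ⟨x, by simp [AddMonoidHom.mem_ker]⟩
  left_inv _ := rfl
  right_inv _ := rfl
  map_add' _ _ := rfl

noncomputable def homologyOfZeroZero {C2 C1 C0 : Type*} [AddCommGroup C2] [AddCommGroup C1]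
    [AddCommGroup C0] : homologyOf (0 : C1 →+ C0) (0 : C2 →+ C1) ≃+ C1 :=
  ((QuotientAddGroup.quotientAddEquivOfEq (M := ((0 : C2 →+ C1).range).addSubgroupOf
      (0 : C1 →+ C0).ker) (N := ⊥) (by
    ext x
    simp only [AddSubgroup.mem_addSubgroupOf, AddMonoidHom.mem_range, AddSubgroup.mem_bot]
    constructor
    · rintro ⟨y, hy⟩; exact Subtype.ext (by simp [← hy])
    · rintro rfl; exact ⟨0, by simp⟩)).trans
    QuotientAddGroup.quotientBot).trans kerZeroEquiv

noncomputable def quotProdEquiv [AddCommGroup G] [AddCommGroup H] (A : AddSubgroup G)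
    (B : AddSubgroup H) : ((G × H) ⧸ (A.prod B)) ≃+ (G ⧸ A) × (H ⧸ B) := by
  refine (QuotientAddGroup.quotientAddEquivOfEq (N :=
    (((QuotientAddGroup.mk' A).comp (AddMonoidHom.fst G H)).prod
      ((QuotientAddGroup.mk' B).comp (AddMonoidHom.snd G H))).ker) ?_).trans
    (QuotientAddGroup.quotientKerEquivOfSurjective _ ?_)
  · ext x
    simp [AddMonoidHom.mem_ker, Prod.ext_iff, QuotientAddGroup.eq_zero_iff,
      AddSubgroup.mem_prod]
  · rintro ⟨a, b⟩
    obtain ⟨a, rfl⟩ := QuotientAddGroup.mk'_surjective A a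
    obtain ⟨b, rfl⟩ := QuotientAddGroup.mk'_surjective B b
    exact ⟨(a, b), rfl⟩

def kerProdEquiv {B1 B0 C1 C0 : Type*} [AddCommGroup B1] [AddCommGroup B0] [AddCommGroup C1]
    [AddCommGroup C0] (f1 : B1 →+ B0) (g1 : C1 →+ C0) :
    (f1.prodMap g1).ker ≃+ f1.ker × g1.ker where
  toFun x := (⟨x.1.1, AddMonoidHom.mem_ker.mpr
      (congrArg Prod.fst (AddMonoidHom.mem_ker.mp x.2))⟩,
    ⟨x.1.2, AddMonoidHom.mem_ker.mpr
      (congrArg Prod.snd (AddMonoidHom.mem_ker.mp x.2))⟩)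
  invFun y := ⟨(y.1.1, y.2.1), AddMonoidHom.mem_ker.mpr (by
    have h1 := AddMonoidHom.mem_ker.mp y.1.2
    have h2 := AddMonoidHom.mem_ker.mp y.2.2
    simp [AddMonoidHom.coe_prodMap, h1, h2, Prod.ext_iff])⟩
  left_inv x := rfl
  right_inv y := rfl
  map_add' x y := rfl

noncomputable def homologyOfProd {B2 B1 B0 C2 C1 C0 : Type*} [AddCommGroup B2] [AddCommGroup B1]
    [AddCommGroup B0] [AddCommGroup C2] [AddCommGroup C1] [AddCommGroup C0]
    (f1 : B1 →+ B0) (f2 : B2 →+ B1) (g1 : C1 →+ C0) (g2 : C2 →+ C1) :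
    homologyOf (f1.prodMap g1) (f2.prodMap g2) ≃+ homologyOf f1 f2 × homologyOf g1 g2 :=
  (QuotientAddGroup.congr _ _ (kerProdEquiv f1 g1) (by
    apply map_eq_of_mem_iff
    intro x
    simp only [AddSubgroup.mem_addSubgroupOf, AddMonoidHom.mem_range, AddSubgroup.mem_prod]
    constructor
    · rintro ⟨⟨a, b⟩, hab⟩
      exact ⟨⟨a, congrArg Prod.fst hab⟩, ⟨b, congrArg Prod.snd hab⟩⟩
    · rintro ⟨⟨a, ha⟩, ⟨b, hb⟩⟩
      exact ⟨(a, b), by simp [AddMonoidHom.coe_prodMap, Prod.ext_iff, ha, hb]; exact ⟨rfl, rfl⟩⟩)).trans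
    (quotProdEquiv _ _)

end Infra


section Maps

variable {E : Type*} [LinearOrder E] [Fintype E] {I : E → E → Prop}

set_option linter.unusedSectionVars false

lemma Ad_single {X : Type*} (act : Option X → E → Option X) (s : ℕ)
    (p : Option X × Clique I (s + 1)) :
    Ad I act s (Finsupp.single p 1) =
      ∑ e ∈ p.2.val.attach, ((-1 : ℤ) ^ (posIdx p.2 e + 1)) •
        (Finsupp.single (act p.1 e.val, faceClique p.2 e) (1 : ℤ)
          - Finsupp.single (p.1, faceClique p.2 e) 1) := by
  simp [Ad, Finsupp.liftAddHom_apply_single]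

lemma Kd_single (s : ℕ) (S : Clique I (s + 1)) :
    Kd I s (Finsupp.single S 1) =
      ∑ e ∈ S.val.attach, ((-1 : ℤ) ^ posIdx S e) •
        Finsupp.single (faceClique S e) (1 : ℤ) := by
  simp [Kd, Finsupp.liftAddHom_apply_single]

noncomputable def tval (I : E → E → Prop) {s : ℕ} (c : ℤ) (p : Option (Fin 2) × Clique I s) :
    AC I (Fin 2) s :=
  Finsupp.single p 1 + (if p.1 = some 0 then
    c • (Finsupp.single ((none : Option (Fin 2)), p.2) (1 : ℤ)
      - Finsupp.single (some 1, p.2) 1) else 0)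

noncomputable def Tmap (I : E → E → Prop) (s : ℕ) (c : ℤ) :
    AC I (Fin 2) s →+ AC I (Fin 2) s :=
  Finsupp.liftAddHom fun p => zmultiplesHom _ (tval I c p)

lemma Tmap_single (s : ℕ) (c : ℤ) (p : Option (Fin 2) × Clique I s) :
    Tmap I s c (Finsupp.single p 1) = tval I c p := by
  simp [Tmap, Finsupp.liftAddHom_apply_single]

lemma Tmap_comp (s : ℕ) (c c' : ℤ) (x : AC I (Fin 2) s) :
    Tmap I s c (Tmap I s c' x) = Tmap I s (c + c') x := by
  have : (Tmap I s c).comp (Tmap I s c') = Tmap I s (c + c') := by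
    apply finsuppIntHom_ext
    intro p
    rcases p with ⟨o, S⟩
    simp only [AddMonoidHom.comp_apply, Tmap_single, tval]
    by_cases h : o = some 0
    · subst h
      simp only [if_true, map_add, map_zsmul, map_sub, Tmap_single, tval,
        reduceCtorEq, if_false, Option.some.injEq,
        show ((1 : Fin 2) = 0) = False from by simp [Fin.ext_iff], add_zero]
      module
    · simp [h, Tmap_single, tval]
  exact DFunLike.congr_fun this x

lemma Tmap_zero_eq (s : ℕ) (x : AC I (Fin 2) s) : Tmap I s 0 x = x := by
  have : Tmap I s 0 = AddMonoidHom.id _ := by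
    apply finsuppIntHom_ext
    intro p
    simp [Tmap_single, tval]
  rw [this]; rfl

noncomputable def Tequiv (I : E → E → Prop) (s : ℕ) (c : ℤ) :
    AC I (Fin 2) s ≃+ AC I (Fin 2) s :=
  AddMonoidHom.toAddEquiv (Tmap I s c) (Tmap I s (-c))
    (AddMonoidHom.ext fun x => by
      simp [AddMonoidHom.comp_apply, Tmap_comp, Tmap_zero_eq])
    (AddMonoidHom.ext fun x => by
      simp [AddMonoidHom.comp_apply, Tmap_comp, Tmap_zero_eq])

lemma T_chain (s : ℕ) (c : ℤ) (x : AC I (Fin 2) (s + 1)) :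
    Tmap I s c (Ad I (actL E) s x) = Ad I (actN E) s (Tmap I (s + 1) (c + 1) x) := by
  have : (Tmap I s c).comp (Ad I (actL E) s)
      = (Ad I (actN E) s).comp (Tmap I (s + 1) (c + 1)) := by
    apply finsuppIntHom_ext
    rintro ⟨o, S⟩
    simp only [AddMonoidHom.comp_apply, Ad_single, map_sum, map_zsmul, map_sub,
      Tmap_single, tval]
    match o with
    | none =>
        simp [actL, actN, Ad_single]
    | some 1 =>
        simp [actL, actN, Ad_single, show (1 : Fin 2) ≠ 0 from by decide]
    | some 0 =>
        simp only [actL, actN, Option.bind_some, if_pos rfl, map_add, map_zsmul, map_sub,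
          Ad_single, Option.some.injEq, show (1 : Fin 2) ≠ 0 from by decide, if_false,
          reduceCtorEq, if_neg, add_zero, if_true, sub_self, smul_zero,
          Finset.sum_const_zero, zero_sub, smul_neg, Finset.smul_sum]
        rw [← sub_eq_add_neg, ← Finset.sum_sub_distrib]
        refine Finset.sum_congr rfl fun e _ => ?_
        module
  exact DFunLike.congr_fun this x

end Maps

section Psi

set_option linter.unusedSectionVars false

variable {E : Type*} [LinearOrder E] [Fintype E] {I : E → E → Prop}

/-- The product model complex: `K ⊕ K ⊕ (cliques with zero differential)`. -/
abbrev DC (I : E → E → Prop) (s : ℕ) : Type _ := KC I s × (KC I s × KC I s)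

@[reducible] noncomputable def Dd (I : E → E → Prop) (s : ℕ) : DC I (s + 1) →+ DC I s :=
  (Kd I s).prodMap ((Kd I s).prodMap 0)

noncomputable def psival {s : ℕ} (p : Option (Fin 2) × Clique I s) : DC I s :=
  ((if p.1 = some 0 then Finsupp.single p.2 1 else 0),
   (if p.1 = some 1 then Finsupp.single p.2 1 else 0),
   Finsupp.single p.2 1)

noncomputable def psimap (I : E → E → Prop) (s : ℕ) : AC I (Fin 2) s →+ DC I s :=
  Finsupp.liftAddHom fun p => zmultiplesHom _ (psival p)

lemma psimap_single (s : ℕ) (p : Option (Fin 2) × Clique I s) :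
    psimap I s (Finsupp.single p 1) = psival p := by
  simp [psimap, Finsupp.liftAddHom_apply_single]

noncomputable def g0map (I : E → E → Prop) (s : ℕ) : KC I s →+ AC I (Fin 2) s :=
  Finsupp.liftAddHom fun S => zmultiplesHom _
    (Finsupp.single (some 0, S) 1 - Finsupp.single ((none : Option (Fin 2)), S) 1)

noncomputable def g1map (I : E → E → Prop) (s : ℕ) : KC I s →+ AC I (Fin 2) s :=
  Finsupp.liftAddHom fun S => zmultiplesHom _
    (Finsupp.single (some 1, S) 1 - Finsupp.single ((none : Option (Fin 2)), S) 1)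

noncomputable def g2map (I : E → E → Prop) (s : ℕ) : KC I s →+ AC I (Fin 2) s :=
  Finsupp.liftAddHom fun S => zmultiplesHom _
    (Finsupp.single ((none : Option (Fin 2)), S) (1 : ℤ))

noncomputable def chimap (I : E → E → Prop) (s : ℕ) : DC I s →+ AC I (Fin 2) s :=
  (g0map I s).coprod ((g1map I s).coprod (g2map I s))

lemma chi_psi (s : ℕ) : (chimap I s).comp (psimap I s) = AddMonoidHom.id _ := by
  apply finsuppIntHom_ext
  rintro ⟨o, S⟩
  simp only [AddMonoidHom.comp_apply, psimap_single, psival, chimap,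
    AddMonoidHom.coprod_apply, AddMonoidHom.id_apply]
  match o with
  | none => simp [g0map, g1map, g2map, Finsupp.liftAddHom_apply_single]
  | some 0 =>
      simp [g0map, g1map, g2map, Finsupp.liftAddHom_apply_single, Fin.ext_iff]
  | some 1 =>
      simp [g0map, g1map, g2map, Finsupp.liftAddHom_apply_single, Fin.ext_iff]

lemma psi_g0 (s : ℕ) (a : KC I s) : psimap I s (g0map I s a) = (a, 0, 0) := by
  induction a using Finsupp.induction_linear with
  | zero => simp; rfl
  | add f g hf hg => rw [map_add, map_add, hf, hg]; rw [Prod.ext_iff]; simp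
  | single S b =>
      rw [g0map, Finsupp.liftAddHom_apply_single]
      simp only [zmultiplesHom_apply, map_zsmul, map_sub, psimap_single, psival]
      simp [Prod.ext_iff, Finsupp.smul_single]

lemma psi_g1 (s : ℕ) (a : KC I s) : psimap I s (g1map I s a) = (0, a, 0) := by
  induction a using Finsupp.induction_linear with
  | zero => simp; rfl
  | add f g hf hg => rw [map_add, map_add, hf, hg]; rw [Prod.ext_iff]; simp
  | single S b =>
      rw [g1map, Finsupp.liftAddHom_apply_single]
      simp only [zmultiplesHom_apply, map_zsmul, map_sub, psimap_single, psival]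
      simp [Prod.ext_iff, Finsupp.smul_single, Fin.ext_iff]

lemma psi_g2 (s : ℕ) (a : KC I s) : psimap I s (g2map I s a) = (0, 0, a) := by
  induction a using Finsupp.induction_linear with
  | zero => simp; rfl
  | add f g hf hg => rw [map_add, map_add, hf, hg]; rw [Prod.ext_iff]; simp
  | single S b =>
      rw [g2map, Finsupp.liftAddHom_apply_single]
      simp only [zmultiplesHom_apply, map_zsmul, psimap_single, psival]
      simp [Prod.ext_iff, Finsupp.smul_single]

lemma psi_chi (s : ℕ) : (psimap I s).comp (chimap I s) = AddMonoidHom.id _ := by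
  apply AddMonoidHom.ext
  rintro ⟨a, b, c⟩
  simp only [AddMonoidHom.comp_apply, chimap, AddMonoidHom.coprod_apply, map_add,
    psi_g0, psi_g1, psi_g2, AddMonoidHom.id_apply]
  rw [Prod.ext_iff]; simp

noncomputable def psiequiv (I : E → E → Prop) (s : ℕ) : AC I (Fin 2) s ≃+ DC I s :=
  AddMonoidHom.toAddEquiv (psimap I s) (chimap I s) (chi_psi s) (psi_chi s)

lemma psi_chain (s : ℕ) (x : AC I (Fin 2) (s + 1)) :
    psimap I s (Ad I (actN E) s x) = Dd I s (psimap I (s + 1) x) := by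
  have : (psimap I s).comp (Ad I (actN E) s) = (Dd I s).comp (psimap I (s + 1)) := by
    apply finsuppIntHom_ext
    rintro ⟨o, S⟩
    simp only [AddMonoidHom.comp_apply, Ad_single, map_sum, map_zsmul, map_sub,
      psimap_single, psival, actN, Dd, AddMonoidHom.coe_prodMap, Prod.map]
    match o with
    | none =>
        simp
        rfl
    | some 0 =>
        refine Prod.ext ?_ (Prod.ext ?_ ?_) <;>
          simp [Prod.fst_sum, Prod.snd_sum, Kd_single, Fin.ext_iff] <;>
          · rw [← Finset.sum_neg_distrib]
            exact Finset.sum_congr rfl fun e _ => by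
              rw [← Finsupp.single_neg]; congr 1; ring
    | some 1 =>
        refine Prod.ext ?_ (Prod.ext ?_ ?_) <;>
          simp [Prod.fst_sum, Prod.snd_sum, Kd_single, Fin.ext_iff] <;>
          · rw [← Finset.sum_neg_distrib]
            exact Finset.sum_congr rfl fun e _ => by
              rw [← Finsupp.single_neg]; congr 1; ring
  exact DFunLike.congr_fun this x

end Psi

section Assemble

set_option linter.unusedSectionVars false

variable {E : Type*} [LinearOrder E] [Fintype E] {I : E → E → Prop}

instance cliqueFinite (I : E → E → Prop) (s : ℕ) : Finite (Clique I s) :=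
  inferInstanceAs (Finite {S : Finset E // S.card = s ∧ IsClique I S})

noncomputable def finsuppFunAddEquiv {α : Type*} [Finite α] : (α →₀ ℤ) ≃+ (α → ℤ) :=
  { Finsupp.equivFunOnFinite with map_add' := fun f g => rfl }

noncomputable def kcEquiv (I : E → E → Prop) (s : ℕ) :
    KC I s ≃+ (Fin (pClique I s) → ℤ) :=
  (Finsupp.domCongr (Finite.equivFin (Clique I s))).trans finsuppFunAddEquiv

def assembleEquiv {H Z : Type*} [AddCommGroup H] [AddCommGroup Z] :
    (H × (H × Z)) ≃+ ((Fin 2 → H) × Z) where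
  toFun x := (![x.1, x.2.1], x.2.2)
  invFun y := (y.1 0, (y.1 1, y.2))
  left_inv x := rfl
  right_inv y := by
    refine Prod.ext ?_ rfl
    funext i; fin_cases i <;> rfl
  map_add' x y := by
    refine Prod.ext ?_ rfl
    funext i; fin_cases i <;> rfl

end Assemble

noncomputable def eDlemma {E : Type*} [LinearOrder E] [Fintype E] (I : E → E → Prop) (t : ℕ) :
    homologyOf (Dd I t) (Dd I (t + 1)) ≃+
    ((Fin 2 → homologyOf (Kd I t) (Kd I (t + 1))) × (Fin (pClique I (t + 1)) → ℤ)) := by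
  have h1 : homologyOf (Dd I t) (Dd I (t + 1)) ≃+
      homologyOf (Kd I t) (Kd I (t + 1)) ×
        homologyOf ((Kd I t).prodMap (0 : KC I (t + 1) →+ KC I t))
          ((Kd I (t + 1)).prodMap (0 : KC I (t + 2) →+ KC I (t + 1))) :=
    homologyOfProd _ _ _ _
  have h2 : homologyOf ((Kd I t).prodMap (0 : KC I (t + 1) →+ KC I t))
      ((Kd I (t + 1)).prodMap (0 : KC I (t + 2) →+ KC I (t + 1))) ≃+
      homologyOf (Kd I t) (Kd I (t + 1)) ×
        homologyOf (0 : KC I (t + 1) →+ KC I t) (0 : KC I (t + 2) →+ KC I (t + 1)) :=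
    homologyOfProd _ _ _ _
  have h3 : homologyOf (0 : KC I (t + 1) →+ KC I t) (0 : KC I (t + 2) →+ KC I (t + 1)) ≃+
      (Fin (pClique I (t + 1)) → ℤ) := homologyOfZeroZero.trans (kcEquiv I (t + 1))
  exact h1.trans ((AddEquiv.prodCongr (AddEquiv.refl _)
    (h2.trans (AddEquiv.prodCongr (AddEquiv.refl _) h3))).trans assembleEquiv)

/-- For the two pointed `M(E,I)`-sets `𝔏` and `𝔑` on
`{x₀, x₁, *}` above, `H_s(A(𝔏)) ≅ H_s(A(𝔑))` for every `s ≥ 0`; in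
particular, for `s ≥ 1` both are isomorphic to
`(H_s(K(E,I)))² ⊕ ℤ^{p_s}`. -/
theorem stmt10 {E : Type*} [LinearOrder E] [Fintype E] [Nonempty E]
    (I : E → E → Prop) (hirr : ∀ e, ¬ I e e) (hsym : ∀ e e', I e e' → I e' e) :
    (∀ s : ℕ, Nonempty
      (Hmlgy (AC I (Fin 2)) (Ad I (actL E)) s ≃+
        Hmlgy (AC I (Fin 2)) (Ad I (actN E)) s)) ∧
    (∀ s : ℕ, 1 ≤ s → Nonempty
      (Hmlgy (AC I (Fin 2)) (Ad I (actL E)) s ≃+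
        (Fin 2 → Hmlgy (KC I) (Kd I) s) × (Fin (pClique I s) → ℤ))) ∧
    (∀ s : ℕ, 1 ≤ s → Nonempty
      (Hmlgy (AC I (Fin 2)) (Ad I (actN E)) s ≃+
        (Fin 2 → Hmlgy (KC I) (Kd I) s) × (Fin (pClique I s) → ℤ))) := by
  have eLN : ∀ s, Hmlgy (AC I (Fin 2)) (Ad I (actL E)) s ≃+
      Hmlgy (AC I (Fin 2)) (Ad I (actN E)) s :=
    hmlgyCongr _ _ _ _ (fun n => Tequiv I n (n : ℤ)) (fun n x => by
      have h := T_chain (I := I) n (n : ℤ) x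
      show Tmap I n (n : ℤ) _ = Ad I (actN E) n (Tmap I (n + 1) (((n + 1 : ℕ)) : ℤ) x)
      push_cast
      exact h)
  have eND : ∀ s, Hmlgy (AC I (Fin 2)) (Ad I (actN E)) s ≃+ Hmlgy (DC I) (Dd I) s :=
    hmlgyCongr _ _ _ _ (fun n => psiequiv I n) (fun n x => psi_chain n x)
  have eD : ∀ t : ℕ, homologyOf (Dd I t) (Dd I (t + 1)) ≃+
      ((Fin 2 → homologyOf (Kd I t) (Kd I (t + 1))) × (Fin (pClique I (t + 1)) → ℤ)) :=
    fun t => eDlemma I t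
  refine ⟨fun s => ⟨eLN s⟩, fun s hs => ?_, fun s hs => ?_⟩
  · obtain ⟨t, rfl⟩ : ∃ t, s = t + 1 := ⟨s - 1, by omega⟩
    exact ⟨((eLN _).trans (eND _)).trans (eD t)⟩
  · obtain ⟨t, rfl⟩ : ∃ t, s = t + 1 := ⟨s - 1, by omega⟩
    exact ⟨(eND _).trans (eD t)⟩

end PCMHomology
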